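/- Let d ≥ 1 and let A ⊆ ℤ^d. If lim_{i→∞} d̄(A^{[i]}) = d̄(A) = α > 0, then A is upper thick of level α; that is, for every k ∈ ℕ, the upper density of {z ∈ ℤ^d : z + [-k,k]^d ⊆ A} is at least α. -/

import Mathlib

open Filter Pointwise

/-- The `d`-dimensional cube `[-m, m]^d` in `ℤ^d`. -/
def cube (d m : ℕ) : Set (Fin d → ℤ) :=
  Set.Icc (fun _ => -(m : ℤ)) (fun _ => (m : ℤ))

/-- The translated cube `z + [-k, k]^d`. -/
def cubeAt (d k : ℕ) (z : Fin d → ℤ) : Set (Fin d → ℤ) :=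
  Set.Icc (fun i => z i - (k : ℤ)) (fun i => z i + (k : ℤ))

/-- The `n`-block set `A_{[n]} = {x : (n·x + [0, n-1]^d) ∩ A ≠ ∅}`. -/
def blockSet (d : ℕ) (A : Set (Fin d → ℤ)) (n : ℕ) : Set (Fin d → ℤ) :=
  {x | ∃ t ∈ Set.Icc (0 : Fin d → ℤ) (fun _ => (n : ℤ) - 1), (n : ℤ) • x + t ∈ A}

/-- The set `A^{[n]} = n·A_{[n]} + [0, n-1]^d`. -/
def superBlockSet (d : ℕ) (A : Set (Fin d → ℤ)) (n : ℕ) : Set (Fin d → ℤ) :=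
  {w | ∃ x ∈ blockSet d A n,
    ∃ t ∈ Set.Icc (0 : Fin d → ℤ) (fun _ => (n : ℤ) - 1), w = (n : ℤ) • x + t}

/-- Upper asymptotic density of `A ⊆ ℤ^d`. -/
noncomputable def upperDensity (d : ℕ) (A : Set (Fin d → ℤ)) : ℝ :=
  limsup (fun n : ℕ => (Set.ncard (A ∩ cube d n) : ℝ) / (2 * (n : ℝ) + 1) ^ d) atTop

namespace S6
variable {d : ℕ}

def edge (d k n : ℕ) : Set (Fin d → ℤ) :=
  {a | ∃ i, a i % (n:ℤ) < (k:ℤ) ∨ (n:ℤ) - 1 - (k:ℤ) < a i % (n:ℤ)}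

lemma mem_IccP {l u t : Fin d → ℤ} :
    t ∈ Set.Icc l u ↔ ∀ i, l i ≤ t i ∧ t i ≤ u i := by
  simp [Set.mem_Icc, Pi.le_def, forall_and]

lemma mem_cube {m : ℕ} {a : Fin d → ℤ} :
    a ∈ cube d m ↔ ∀ i, -(m:ℤ) ≤ a i ∧ a i ≤ m := by
  simp [cube, Set.mem_Icc, Pi.le_def, forall_and]

lemma cube_eq_coe (d m : ℕ) :
    cube d m = ↑(Finset.Icc (fun _ => -(m:ℤ) : Fin d → ℤ) (fun _ => (m:ℤ))) := by
  rw [Finset.coe_Icc]; rfl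

lemma cube_finite (d m : ℕ) : (cube d m).Finite := by
  rw [cube_eq_coe]; exact (Finset.Icc _ _).finite_toSet

lemma ncard_cube (d m : ℕ) : (cube d m).ncard = (2*m+1)^d := by
  rw [cube_eq_coe, Set.ncard_coe_finset, Pi.card_Icc]
  have hcard : (Finset.Icc (-(m:ℤ)) (m:ℤ)).card = 2*m+1 := by rw [Int.card_Icc]; omega
  rw [Finset.prod_congr rfl (fun i _ => hcard), Finset.prod_const, Finset.card_univ,
    Fintype.card_fin]

lemma inter_cube_finite (S : Set (Fin d → ℤ)) (m : ℕ) : (S ∩ cube d m).Finite :=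
  ((cube_finite d m).inter_of_left S).subset (fun x hx => ⟨hx.2, hx.1⟩)

lemma ncard_inter_cube_le (S : Set (Fin d → ℤ)) (m : ℕ) :
    (S ∩ cube d m).ncard ≤ (2*m+1)^d := by
  rw [← ncard_cube d m]
  exact Set.ncard_le_ncard Set.inter_subset_right (cube_finite d m)

lemma subset_superBlockSet (A : Set (Fin d → ℤ)) {n : ℕ} (hn : 1 ≤ n) :
    A ⊆ superBlockSet d A n := by
  intro a ha
  have hn0 : (0:ℤ) < (n:ℤ) := by exact_mod_cast hn
  have hmem : (fun i => a i % (n:ℤ)) ∈ Set.Icc (0 : Fin d → ℤ) (fun _ => (n:ℤ) - 1) := by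
    rw [mem_IccP]
    intro i
    exact ⟨Int.emod_nonneg _ hn0.ne', by have := Int.emod_lt_of_pos (a i) hn0; omega⟩
  have heq : (n:ℤ) • (fun i => a i / (n:ℤ)) + (fun i => a i % (n:ℤ)) = a := by
    funext i
    simpa [smul_eq_mul] using Int.mul_ediv_add_emod (a i) (n:ℤ)
  exact ⟨fun i => a i / (n:ℤ), ⟨fun i => a i % (n:ℤ), hmem, by rw [heq]; exact ha⟩,
    fun i => a i % (n:ℤ), hmem, heq.symm⟩

lemma cover (A : Set (Fin d → ℤ)) {k n : ℕ} (m : ℕ) (hn : 2*k+1 ≤ n) :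
    A ∩ cube d m ⊆ (({z | cubeAt d k z ⊆ A} ∩ cube d m) ∪ (edge d k n ∩ cube d m))
      ∪ (⋃ t ∈ cube d k, (fun h => h + t) '' ((superBlockSet d A n \ A) ∩ cube d (m+k))) := by
  rintro a ⟨haA, ham⟩
  by_cases hB : cubeAt d k a ⊆ A
  · exact Or.inl (Or.inl ⟨hB, ham⟩)
  by_cases hE : a ∈ edge d k n
  · exact Or.inl (Or.inr ⟨hE, ham⟩)
  right
  simp only [edge, Set.mem_setOf_eq, not_exists, not_or, not_lt] at hE
  obtain ⟨h, hhmem, hhA⟩ := Set.not_subset.mp hB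
  rw [show cubeAt d k a = Set.Icc (fun i => a i - (k:ℤ)) (fun i => a i + (k:ℤ)) from rfl,
    mem_IccP] at hhmem
  have ham' := mem_cube.mp ham
  have hn0 : (0:ℤ) < (n:ℤ) := by exact_mod_cast Nat.lt_of_lt_of_le (Nat.succ_pos _) hn
  have hdm : ∀ i, (n:ℤ) * (a i / (n:ℤ)) + a i % (n:ℤ) = a i := fun i => Int.mul_ediv_add_emod _ _
  have hxblock : (fun i => a i / (n:ℤ)) ∈ blockSet d A n := by
    refine ⟨fun i => a i % (n:ℤ), ?_, ?_⟩
    · rw [mem_IccP]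
      intro i
      exact ⟨Int.emod_nonneg _ hn0.ne', by have := Int.emod_lt_of_pos (a i) hn0; omega⟩
    · have : (n:ℤ) • (fun i => a i / (n:ℤ)) + (fun i => a i % (n:ℤ)) = a := by
        funext i; simpa [smul_eq_mul] using hdm i
      rw [this]; exact haA
  have hhSB : h ∈ superBlockSet d A n := by
    refine ⟨fun i => a i / (n:ℤ), hxblock, fun i => h i - (n:ℤ) * (a i / (n:ℤ)), ?_, ?_⟩
    · rw [mem_IccP]
      intro i
      have h1 := (hhmem i).1
      have h2 := (hhmem i).2
      have h3 := (hE i).1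
      have h4 := (hE i).2
      have h5 := hdm i
      refine ⟨show (0:ℤ) ≤ _ from ?_, show _ ≤ (n:ℤ) - 1 from ?_⟩ <;> omega
    · funext i
      simp only [Pi.add_apply, Pi.smul_apply, smul_eq_mul]
      ring
  have hhcube : h ∈ cube d (m+k) := by
    rw [mem_cube]
    intro i
    have h1 := (hhmem i).1
    have h2 := (hhmem i).2
    have h3 := (ham' i).1
    have h4 := (ham' i).2
    constructor <;> push_cast <;> omega
  refine Set.mem_biUnion (show (fun i => a i - h i) ∈ cube d k from ?_) ?_
  · rw [mem_cube]
    intro i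
    have h1 := (hhmem i).1
    have h2 := (hhmem i).2
    omega
  · refine ⟨h, ⟨⟨hhSB, hhA⟩, hhcube⟩, ?_⟩
    funext i
    simp only [Pi.add_apply]
    ring

lemma edge_ncard (k n m : ℕ) (hn : 2*k+1 ≤ n) :
    (edge d k n ∩ cube d m).ncard ≤ (2*(m/n)+2)^d * (n^d - (n-2*k)^d) := by
  classical
  have hn0 : (0:ℤ) < (n:ℤ) := by exact_mod_cast Nat.lt_of_lt_of_le (Nat.succ_pos _) hn
  set X : Finset (Fin d → ℤ) :=
    Finset.Icc (fun _ => -(m:ℤ)/(n:ℤ)) (fun _ => (m:ℤ)/(n:ℤ)) with hX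
  set F : (Fin d → ℤ) → Finset (Fin d → ℤ) := fun x =>
    Finset.Icc (fun i => (n:ℤ)*x i) (fun i => (n:ℤ)*x i + ((n:ℤ)-1)) \
    Finset.Icc (fun i => (n:ℤ)*x i + (k:ℤ)) (fun i => (n:ℤ)*x i + ((n:ℤ)-1-(k:ℤ))) with hF
  have hsub : edge d k n ∩ cube d m ⊆ ↑(X.biUnion F) := by
    rintro a ⟨haE, ham⟩
    have ham' := mem_cube.mp ham
    have hdm : ∀ i, (n:ℤ) * (a i / (n:ℤ)) + a i % (n:ℤ) = a i := fun i => Int.mul_ediv_add_emod _ _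
    have hr0 : ∀ i, 0 ≤ a i % (n:ℤ) := fun i => Int.emod_nonneg _ hn0.ne'
    have hr1 : ∀ i, a i % (n:ℤ) < (n:ℤ) := fun i => Int.emod_lt_of_pos _ hn0
    rw [Finset.mem_coe, Finset.mem_biUnion]
    refine ⟨fun i => a i / (n:ℤ), ?_, ?_⟩
    · rw [hX, Finset.mem_Icc]
      constructor <;> rw [Pi.le_def] <;> intro i
      · exact Int.ediv_le_ediv hn0 (ham' i).1
      · exact Int.ediv_le_ediv hn0 (ham' i).2
    · rw [hF]
      rw [Finset.mem_sdiff]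
      constructor
      · rw [Finset.mem_Icc]
        constructor <;> rw [Pi.le_def] <;> intro i <;> beta_reduce <;>
          [have := hr0 i; have := hr1 i] <;> have := hdm i <;> omega
      · obtain ⟨i, hi⟩ := haE
        rw [Finset.mem_Icc]
        rintro ⟨hl, hu⟩
        have hl' := hl i
        have hu' := hu i
        beta_reduce at hl' hu'
        have := hdm i
        omega
  calc (edge d k n ∩ cube d m).ncard ≤ (X.biUnion F).card := by
        rw [← Set.ncard_coe_finset]
        exact Set.ncard_le_ncard hsub (X.biUnion F).finite_toSet
    _ ≤ ∑ x ∈ X, (F x).card := Finset.card_biUnion_le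
    _ ≤ X.card * (n^d - (n-2*k)^d) := by
        rw [← smul_eq_mul]
        refine Finset.sum_le_card_nsmul _ _ _ (fun x _ => ?_)
        have hss : Finset.Icc (fun i => (n:ℤ)*x i + (k:ℤ)) (fun i => (n:ℤ)*x i + ((n:ℤ)-1-(k:ℤ)))
            ⊆ Finset.Icc (fun i => (n:ℤ)*x i) (fun i => (n:ℤ)*x i + ((n:ℤ)-1)) := by
          apply Finset.Icc_subset_Icc <;> rw [Pi.le_def] <;> intro i <;> omega
        rw [hF]
        rw [Finset.card_sdiff_of_subset hss, Pi.card_Icc, Pi.card_Icc]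
        have h1 : ∀ i : Fin d, (Finset.Icc ((n:ℤ)*x i) ((n:ℤ)*x i + ((n:ℤ)-1))).card = n := by
          intro i; rw [Int.card_Icc]; omega
        have h2 : ∀ i : Fin d,
            (Finset.Icc ((n:ℤ)*x i + (k:ℤ)) ((n:ℤ)*x i + ((n:ℤ)-1-(k:ℤ)))).card = n - 2*k := by
          intro i; rw [Int.card_Icc]; omega
        rw [Finset.prod_congr rfl (fun i _ => h1 i), Finset.prod_congr rfl (fun i _ => h2 i),
          Finset.prod_const, Finset.prod_const, Finset.card_univ, Fintype.card_fin]
    _ ≤ (2*(m/n)+2)^d * (n^d - (n-2*k)^d) := by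
        apply Nat.mul_le_mul_right
        rw [hX, Pi.card_Icc]
        have e1 : ((m:ℤ))/(n:ℤ) = ((m/n : ℕ) : ℤ) := by
          rw [Int.natCast_ediv]
        have e2 : -(((m/n : ℕ)):ℤ) - 1 ≤ (-(m:ℤ))/(n:ℤ) := by
          rw [Int.le_ediv_iff_mul_le hn0]
          have h3 := Nat.div_add_mod m n
          have h4 : m % n < n := Nat.mod_lt _ (by omega)
          push_cast
          nlinarith [h3, h4]
        have h5 : ∀ i : Fin d,
            (Finset.Icc (-(m:ℤ)/(n:ℤ)) ((m:ℤ)/(n:ℤ))).card ≤ 2*(m/n)+2 := by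
          intro i; rw [Int.card_Icc]; omega
        calc ∏ _i : Fin d, (Finset.Icc (-(m:ℤ)/(n:ℤ)) ((m:ℤ)/(n:ℤ))).card
            ≤ ∏ _i : Fin d, (2*(m/n)+2) := Finset.prod_le_prod' (fun i _ => h5 i)
          _ = (2*(m/n)+2)^d := by rw [Finset.prod_const, Finset.card_univ, Fintype.card_fin]

lemma master (A : Set (Fin d → ℤ)) {k n : ℕ} (m : ℕ) (hn : 2*k+1 ≤ n) :
    (A ∩ cube d m).ncard ≤ ({z | cubeAt d k z ⊆ A} ∩ cube d m).ncard
      + (2*(m/n)+2)^d * (n^d - (n-2*k)^d)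
      + (2*k+1)^d * ((superBlockSet d A n \ A) ∩ cube d (m+k)).ncard := by
  classical
  set S : Set (Fin d → ℤ) := (superBlockSet d A n \ A) ∩ cube d (m+k) with hS
  have hSfin : S.Finite := inter_cube_finite _ _
  set K : Finset (Fin d → ℤ) := Finset.Icc (fun _ => -(k:ℤ)) (fun _ => (k:ℤ)) with hK
  have hKcard : K.card = (2*k+1)^d := by
    rw [← Set.ncard_coe_finset, ← cube_eq_coe, ncard_cube]
  have hU : (⋃ t ∈ cube d k, (fun h => h + t) '' S)
      ⊆ ↑(Finset.image₂ (fun h t => h + t) hSfin.toFinset K) := by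
    intro y hy
    simp only [Set.mem_iUnion, exists_prop] at hy
    obtain ⟨t, htK, h, hhS, rfl⟩ := hy
    rw [Finset.mem_coe, Finset.mem_image₂]
    have htK' : t ∈ K := by
      rw [hK, ← Finset.mem_coe, Finset.coe_Icc]
      exact htK
    exact ⟨h, hSfin.mem_toFinset.mpr hhS, t, htK', rfl⟩
  have h3 : (⋃ t ∈ cube d k, (fun h => h + t) '' S).ncard ≤ (2*k+1)^d * S.ncard := by
    calc (⋃ t ∈ cube d k, (fun h => h + t) '' S).ncard
        ≤ (Finset.image₂ (fun h t => h + t) hSfin.toFinset K).card := by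
          rw [← Set.ncard_coe_finset]
          exact Set.ncard_le_ncard hU (Finset.image₂ _ _ _).finite_toSet
      _ ≤ hSfin.toFinset.card * K.card := Finset.card_image₂_le _ _ _
      _ = (2*k+1)^d * S.ncard := by
          rw [hKcard, Set.ncard_eq_toFinset_card S hSfin]
          ring
  have hcov := cover A m hn
  have hfin1 : ({z | cubeAt d k z ⊆ A} ∩ cube d m).Finite := inter_cube_finite _ _
  have hfin2 : (edge d k n ∩ cube d m).Finite := inter_cube_finite _ _
  have hfin3 : (⋃ t ∈ cube d k, (fun h => h + t) '' S).Finite :=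
    Set.Finite.subset (Finset.image₂ _ _ _).finite_toSet hU
  calc (A ∩ cube d m).ncard
      ≤ ((({z | cubeAt d k z ⊆ A} ∩ cube d m) ∪ (edge d k n ∩ cube d m))
          ∪ (⋃ t ∈ cube d k, (fun h => h + t) '' S)).ncard :=
        Set.ncard_le_ncard hcov (((hfin1.union hfin2).union hfin3))
    _ ≤ (({z | cubeAt d k z ⊆ A} ∩ cube d m) ∪ (edge d k n ∩ cube d m)).ncard
        + (⋃ t ∈ cube d k, (fun h => h + t) '' S).ncard := Set.ncard_union_le _ _
    _ ≤ (({z | cubeAt d k z ⊆ A} ∩ cube d m).ncard + (edge d k n ∩ cube d m).ncard)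
        + (⋃ t ∈ cube d k, (fun h => h + t) '' S).ncard := by
          exact Nat.add_le_add_right (Set.ncard_union_le _ _) _
    _ ≤ ({z | cubeAt d k z ⊆ A} ∩ cube d m).ncard + (2*(m/n)+2)^d * (n^d - (n-2*k)^d)
        + (2*k+1)^d * S.ncard := by
          have := edge_ncard (d := d) k n m hn
          omega

lemma pow_sub_pow_le {a b : ℝ} (hb : 0 ≤ b) (hab : b ≤ a) (ha : 1 ≤ a) :
    ∀ s : ℕ, a^(s+1) - b^(s+1) ≤ (s+1) * (a-b) * a^s := by
  intro s
  induction s with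
  | zero => norm_num
  | succ s ih =>
    have h1 : b^(s+1) ≤ a^(s+1) := pow_le_pow_left₀ hb hab _
    have h2 : (0:ℝ) ≤ a^s := pow_nonneg (by linarith) _
    have h3 : (0:ℝ) ≤ b^(s+1) := pow_nonneg hb _
    have e1 : a^(s+2) - b^(s+2) = a*(a^(s+1) - b^(s+1)) + (a-b)*b^(s+1) := by ring
    have e2 : a*((s+1) * (a-b) * a^s) = ((s:ℝ)+1)*(a-b)*a^(s+1) := by ring
    calc a^(s+2) - b^(s+2) = a*(a^(s+1) - b^(s+1)) + (a-b)*b^(s+1) := e1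
      _ ≤ a*((s+1) * (a-b) * a^s) + (a-b)*a^(s+1) := by
          have := mul_le_mul_of_nonneg_left ih (by linarith : (0:ℝ) ≤ a)
          have := mul_le_mul_of_nonneg_left h1 (by linarith : (0:ℝ) ≤ a - b)
          push_cast
          nlinarith
      _ = ((s:ℝ)+1+1)*(a-b)*a^(s+1) := by push_cast; ring
      _ = (((s+1:ℕ):ℝ)+1)*(a-b)*a^(s+1) := by push_cast; ring

lemma cube_mono {m m' : ℕ} (h : m ≤ m') : cube d m ⊆ cube d m' := by
  intro a ha
  rw [mem_cube] at ha ⊢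
  intro i
  have := ha i
  have h1 : (m:ℤ) ≤ (m':ℤ) := by exact_mod_cast h
  omega

end S6

set_option maxHeartbeats 2000000 in
theorem stmt_6 (d : ℕ) (hd : 1 ≤ d) (A : Set (Fin d → ℤ)) (α : ℝ)
    (hlim : Tendsto (fun i : ℕ => upperDensity d (superBlockSet d A i)) atTop (nhds α))
    (hA : upperDensity d A = α) (hα : 0 < α) :
    ∀ k : ℕ, α ≤ upperDensity d {z : Fin d → ℤ | cubeAt d k z ⊆ A} := by
  classical
  intro k
  have hd1 : d - 1 + 1 = d := by omega
  set B : Set (Fin d → ℤ) := {z | cubeAt d k z ⊆ A} with hB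
  have hPpos : ∀ m : ℕ, (0:ℝ) < (2*(m:ℝ)+1)^d := fun m => by positivity
  have hfle : ∀ (S : Set (Fin d → ℤ)) (m : ℕ),
      ((S ∩ cube d m).ncard : ℝ) / (2*(m:ℝ)+1)^d ≤ 1 := by
    intro S m
    rw [div_le_one (hPpos m)]
    have h1 := S6.ncard_inter_cube_le S m
    have h2 : ((S ∩ cube d m).ncard : ℝ) ≤ (((2*m+1)^d : ℕ) : ℝ) := Nat.cast_le.mpr h1
    calc ((S ∩ cube d m).ncard : ℝ) ≤ (((2*m+1)^d : ℕ) : ℝ) := h2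
      _ = (2*(m:ℝ)+1)^d := by push_cast; ring
  have hfnn : ∀ (S : Set (Fin d → ℤ)) (m : ℕ),
      (0:ℝ) ≤ ((S ∩ cube d m).ncard : ℝ) / (2*(m:ℝ)+1)^d := fun S m => by positivity
  have hbddS : ∀ S : Set (Fin d → ℤ), IsBoundedUnder (· ≤ ·) atTop
      (fun m : ℕ => ((S ∩ cube d m).ncard : ℝ) / (2*(m:ℝ)+1)^d) :=
    fun S => isBoundedUnder_of ⟨1, fun m => hfle S m⟩
  have hcobdd : ∀ S : Set (Fin d → ℤ), IsCoboundedUnder (· ≤ ·) atTop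
      (fun m : ℕ => ((S ∩ cube d m).ncard : ℝ) / (2*(m:ℝ)+1)^d) :=
    fun S => (isBoundedUnder_of ⟨0, fun m => hfnn S m⟩ :
      IsBoundedUnder (· ≥ ·) atTop _).isCoboundedUnder_flip
  have hα1 : α ≤ 1 := by
    rw [← hA]
    exact limsup_le_of_le (hcobdd A) (Eventually.of_forall (hfle A))
  set C : ℝ := (((2*k+1)^d : ℕ) : ℝ) with hC
  have hC1 : (1:ℝ) ≤ C := by
    have h0 : 1 ≤ (2*k+1)^d := Nat.one_le_pow _ _ (by omega)
    rw [hC]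
    exact_mod_cast h0
  have hCnn : (0:ℝ) ≤ C := by linarith
  have key : ∀ ε : ℝ, 0 < ε → ε ≤ 1 → α - (2+4*C)*ε ≤ upperDensity d B := by
    intro ε hε hε1
    have h1 : ∀ᶠ i in atTop, upperDensity d (superBlockSet d A i) < α + ε :=
      hlim.eventually_lt_const (by linarith)
    obtain ⟨N1, hN1⟩ := exists_nat_ge ((2:ℝ)^d * ((d:ℝ)*(2*(k:ℝ))) / ε)
    obtain ⟨n, hn2, hnge⟩ := (h1.and (eventually_ge_atTop (max N1 (2*k+1)))).exists
    have hnk : 2*k+1 ≤ n := le_trans (le_max_right _ _) hnge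
    have hn1 : 1 ≤ n := by omega
    have hnpos : (0:ℝ) < (n:ℝ) := by exact_mod_cast (by omega : 0 < n)
    have hnR : (2:ℝ)^d * ((d:ℝ)*(2*(k:ℝ))) ≤ ε * (n:ℝ) := by
      have hN1n : (N1:ℝ) ≤ (n:ℝ) := by exact_mod_cast le_trans (le_max_left _ _) hnge
      have h6 := le_trans hN1 hN1n
      rw [div_le_iff₀ hε] at h6
      nlinarith
    have h4 : ∀ᶠ m in atTop,
        ((superBlockSet d A n ∩ cube d m).ncard : ℝ)/(2*(m:ℝ)+1)^d < α + ε := by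
      apply eventually_lt_of_limsup_lt
      · exact hn2
      · exact hbddS _
    obtain ⟨M4, hM4⟩ := eventually_atTop.mp h4
    have htop : Tendsto (fun m : ℕ => 2*(m:ℝ)+1) atTop atTop := by
      apply tendsto_atTop_add_const_right
      exact Tendsto.const_mul_atTop two_pos tendsto_natCast_atTop_atTop
    have ht1 : Tendsto (fun m : ℕ => 2*(k:ℝ)/(2*(m:ℝ)+1)) atTop (nhds 0) :=
      Tendsto.div_atTop tendsto_const_nhds htop
    have ht2 : Tendsto (fun m : ℕ => (1 + 2*(k:ℝ)/(2*(m:ℝ)+1))^d) atTop (nhds 1) := by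
      have := (ht1.const_add 1).pow d
      simpa using this
    have hR : ∀ᶠ m : ℕ in atTop, (2*((m:ℝ)+(k:ℝ))+1)^d ≤ (1+ε)*(2*(m:ℝ)+1)^d := by
      filter_upwards [ht2.eventually_lt_const (by linarith : (1:ℝ) < 1+ε)] with m hm
      have hbase : (0:ℝ) < 2*(m:ℝ)+1 := by positivity
      have heq : 2*((m:ℝ)+(k:ℝ))+1 = (2*(m:ℝ)+1)*(1 + 2*(k:ℝ)/(2*(m:ℝ)+1)) := by
        field_simp
        ring
      calc (2*((m:ℝ)+(k:ℝ))+1)^d = (2*(m:ℝ)+1)^d * (1 + 2*(k:ℝ)/(2*(m:ℝ)+1))^d := by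
            rw [heq, mul_pow]
        _ ≤ (2*(m:ℝ)+1)^d * (1+ε) := mul_le_mul_of_nonneg_left hm.le (by positivity)
        _ = (1+ε)*(2*(m:ℝ)+1)^d := by ring
    have hF : ∃ᶠ m in atTop, α - ε < ((A ∩ cube d m).ncard : ℝ)/(2*(m:ℝ)+1)^d := by
      have hlt : α - ε < upperDensity d A := by rw [hA]; linarith
      exact frequently_lt_of_lt_limsup (hcobdd A) hlt
    have hgood : ∃ᶠ m in atTop,
        α - (2+4*C)*ε ≤ ((B ∩ cube d m).ncard : ℝ)/(2*(m:ℝ)+1)^d := by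
      refine (hF.and_eventually (hR.and (eventually_ge_atTop (max M4 n)))).mono ?_
      rintro m ⟨hfA, hRm, hmge⟩
      have hmn : n ≤ m := le_trans (le_max_right _ _) hmge
      have hmM4 : M4 ≤ m + k := le_trans (le_trans (le_max_left _ _) hmge) (Nat.le_add_right _ _)
      set P : ℝ := (2*(m:ℝ)+1)^d with hP
      have hPp : (0:ℝ) < P := hPpos m
      -- cast the master counting inequality
      have hmaster := S6.master A m hnk
      rw [← hB] at hmaster
      have hmaster' : ((A ∩ cube d m).ncard : ℝ) ≤ ((B ∩ cube d m).ncard : ℝ)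
          + (((2*(m/n)+2)^d * (n^d - (n-2*k)^d) : ℕ) : ℝ)
          + C * (((superBlockSet d A n \ A) ∩ cube d (m+k)).ncard : ℝ) := by
        rw [hC]
        exact_mod_cast hmaster
      -- edge term bound
      have hE1 : (((2*(m/n)+2)^d * (n^d - (n-2*k)^d) : ℕ) : ℝ) ≤ ε * P := by
        have hcast : (((2*(m/n)+2)^d * (n^d - (n-2*k)^d) : ℕ) : ℝ)
            = (2*((m/n : ℕ):ℝ)+2)^d * (((n^d - (n-2*k)^d : ℕ)) : ℝ) := by
          push_cast; ring
        have hLb : (((n^d - (n-2*k)^d : ℕ)) : ℝ) ≤ (d:ℝ) * (2*(k:ℝ)) * (n:ℝ)^(d-1) := by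
          have hle : (n-2*k)^d ≤ n^d := Nat.pow_le_pow_left (by omega) d
          rw [Nat.cast_sub hle]
          have hc2 : (((n-2*k)^d : ℕ) : ℝ) = ((n:ℝ) - 2*(k:ℝ))^d := by
            rw [Nat.cast_pow, Nat.cast_sub (by omega : 2*k ≤ n)]
            push_cast; ring_nf
          rw [hc2, Nat.cast_pow]
          have hb0 : (0:ℝ) ≤ (n:ℝ) - 2*(k:ℝ) := by
            have : (2*k:ℝ) ≤ (n:ℝ) := by exact_mod_cast (by omega : 2*k ≤ n)
            linarith
          have hab : (n:ℝ) - 2*(k:ℝ) ≤ (n:ℝ) := by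
            have : (0:ℝ) ≤ 2*(k:ℝ) := by positivity
            linarith
          have ha1 : (1:ℝ) ≤ (n:ℝ) := by exact_mod_cast hn1
          have hkey := S6.pow_sub_pow_le hb0 hab ha1 (d-1)
          rw [hd1] at hkey
          have hcd : ((d-1:ℕ):ℝ) + 1 = (d:ℝ) := by
            rw [Nat.cast_sub hd]
            push_cast; ring
          rw [hcd] at hkey
          calc (n:ℝ)^d - ((n:ℝ) - 2*(k:ℝ))^d
              ≤ (d:ℝ) * ((n:ℝ) - ((n:ℝ) - 2*(k:ℝ))) * (n:ℝ)^(d-1) := hkey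
            _ = (d:ℝ) * (2*(k:ℝ)) * (n:ℝ)^(d-1) := by ring
        have hs1 : (2*((m/n : ℕ):ℝ)+2) ≤ 2*(2*(m:ℝ)+1)/(n:ℝ) := by
          have h6 : ((m/n : ℕ):ℝ) * (n:ℝ) ≤ (m:ℝ) := by
            rw [← le_div_iff₀ hnpos]
            exact Nat.cast_div_le
          have hmn' : (n:ℝ) ≤ (m:ℝ) := by exact_mod_cast hmn
          rw [le_div_iff₀ hnpos]
          nlinarith
        have hs1nn : (0:ℝ) ≤ 2*((m/n : ℕ):ℝ)+2 := by positivity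
        calc (((2*(m/n)+2)^d * (n^d - (n-2*k)^d) : ℕ) : ℝ)
            = (2*((m/n : ℕ):ℝ)+2)^d * (((n^d - (n-2*k)^d : ℕ)) : ℝ) := hcast
          _ ≤ (2*(2*(m:ℝ)+1)/(n:ℝ))^d * ((d:ℝ) * (2*(k:ℝ)) * (n:ℝ)^(d-1)) := by
              apply mul_le_mul (pow_le_pow_left₀ hs1nn hs1 d) hLb (by positivity) (by positivity)
          _ = ((2:ℝ)^d * ((d:ℝ)*(2*(k:ℝ))) / (n:ℝ)) * P := by
              rw [hP]
              have hne : (n:ℝ) ≠ 0 := hnpos.ne'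
              have hpow : (n:ℝ)^d = (n:ℝ)^(d-1) * (n:ℝ) := by
                conv_lhs => rw [← hd1]
                rw [pow_succ]
              rw [div_pow, mul_pow]
              field_simp
              rw [hpow]
              ring
          _ ≤ ε * P := by
              apply mul_le_mul_of_nonneg_right _ hPp.le
              rw [div_le_iff₀ hnpos]
              linarith
      -- hole term bound
      have hAA' : (A ∩ cube d m).ncard ≤ (A ∩ cube d (m+k)).ncard := by
        apply Set.ncard_le_ncard _ (S6.inter_cube_finite _ _)
        exact Set.inter_subset_inter_right A (S6.cube_mono (by omega))
      have hdisj : Disjoint ((superBlockSet d A n \ A) ∩ cube d (m+k)) (A ∩ cube d (m+k)) := by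
        rw [Set.disjoint_left]
        rintro a ⟨⟨_, ha⟩, _⟩ ⟨ha', _⟩
        exact ha ha'
      have hunion_sub : ((superBlockSet d A n \ A) ∩ cube d (m+k)) ∪ (A ∩ cube d (m+k))
          ⊆ superBlockSet d A n ∩ cube d (m+k) := by
        rintro a (⟨⟨h1', _⟩, h2'⟩ | ⟨h1', h2'⟩)
        · exact ⟨h1', h2'⟩
        · exact ⟨S6.subset_superBlockSet A hn1 h1', h2'⟩
      have hHcount : ((superBlockSet d A n \ A) ∩ cube d (m+k)).ncard
          + (A ∩ cube d (m+k)).ncard ≤ (superBlockSet d A n ∩ cube d (m+k)).ncard := by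
        rw [← Set.ncard_union_eq hdisj (S6.inter_cube_finite _ _) (S6.inter_cube_finite _ _)]
        exact Set.ncard_le_ncard hunion_sub (S6.inter_cube_finite _ _)
      have hSBm : ((superBlockSet d A n ∩ cube d (m+k)).ncard : ℝ)
          < (α+ε) * (2*((m:ℝ)+(k:ℝ))+1)^d := by
        have h7 := hM4 (m+k) hmM4
        rw [div_lt_iff₀ (hPpos (m+k))] at h7
        push_cast at h7
        convert h7 using 3 <;> push_cast <;> ring
      have hH : (((superBlockSet d A n \ A) ∩ cube d (m+k)).ncard : ℝ)
          ≤ (α+ε)*(1+ε)*P - ((A ∩ cube d m).ncard : ℝ) := by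
        have c1 : (((superBlockSet d A n \ A) ∩ cube d (m+k)).ncard : ℝ)
            + ((A ∩ cube d m).ncard : ℝ)
            ≤ ((superBlockSet d A n ∩ cube d (m+k)).ncard : ℝ) := by
          have : ((superBlockSet d A n \ A) ∩ cube d (m+k)).ncard
              + (A ∩ cube d m).ncard ≤ (superBlockSet d A n ∩ cube d (m+k)).ncard := by omega
          exact_mod_cast this
        have c3 : (0:ℝ) ≤ α + ε := by linarith
        have c2 := mul_le_mul_of_nonneg_left hRm c3
        linarith
      -- assemble
      have hfA' : (α - ε) * P < ((A ∩ cube d m).ncard : ℝ) := by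
        rw [← lt_div_iff₀ hPp]
        exact hfA
      have s1 : C * (((superBlockSet d A n \ A) ∩ cube d (m+k)).ncard : ℝ)
          ≤ C * ((α+ε)*(1+ε)*P - ((A ∩ cube d m).ncard : ℝ)) :=
        mul_le_mul_of_nonneg_left hH hCnn
      have s2 : ((A ∩ cube d m).ncard : ℝ) ≤ ((B ∩ cube d m).ncard : ℝ) + ε*P
          + C * ((α+ε)*(1+ε)*P - ((A ∩ cube d m).ncard : ℝ)) := by linarith
      have s3 : (1+C)*((α-ε)*P) ≤ (1+C)*((A ∩ cube d m).ncard : ℝ) :=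
        mul_le_mul_of_nonneg_left hfA'.le (by linarith)
      have s5 : ((1+C)*(α-ε) - ε - C*((α+ε)*(1+ε))) * P ≤ ((B ∩ cube d m).ncard : ℝ) := by
        nlinarith [s2, s3]
      have hscal : α - (2+4*C)*ε ≤ (1+C)*(α-ε) - ε - C*((α+ε)*(1+ε)) := by
        nlinarith [mul_nonneg (mul_nonneg hCnn hε.le) (by linarith : (0:ℝ) ≤ 2 - α - ε)]
      have h9 := mul_le_mul_of_nonneg_right hscal hPp.le
      rw [le_div_iff₀ hPp]
      linarith
    exact le_limsup_of_frequently_le hgood (hbddS B)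
  by_contra hcon
  push_neg at hcon
  have hU1 : (0:ℝ) < α - upperDensity d B := by
    have : upperDensity d B < α := hcon
    linarith
  have hCpos : (0:ℝ) < 2+4*C := by linarith
  set ε : ℝ := min 1 ((α - upperDensity d B)/(2*(2+4*C))) with hεdef
  have hε0 : (0:ℝ) < ε := lt_min one_pos (by positivity)
  have hkey := key ε hε0 (min_le_left _ _)
  have h2 : (2+4*C)*ε ≤ (α - upperDensity d B)/2 := by
    have hmr := min_le_right (1:ℝ) ((α - upperDensity d B)/(2*(2+4*C)))
    calc (2+4*C)*ε ≤ (2+4*C)*((α - upperDensity d B)/(2*(2+4*C))) :=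
        mul_le_mul_of_nonneg_left hmr (by linarith)
      _ = (α - upperDensity d B)/2 := by field_simp
  linarith
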